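/- (a) For every ξ ∈ K and every x_ξ ∈ S_ξ, one has ū^K(x_ξ) = u(x_ξ) and ξ ∈ ∂ū^K(x_ξ). (b) For every x ∈ ℝⁿ and every ξ ∈ ∂ū^K(x) ∩ K, there exists v ∈ N(ξ, K) such that x − v belongs to the convex hull of S_ξ. -/

import Mathlib

open MeasureTheory Metric Set
open scoped RealInnerProductSpace Topology
open scoped Pointwise

noncomputable section

abbrev Euc (n : ℕ) := EuclideanSpace ℝ (Fin n)

/-- The `K`-envelope of `u`. -/
def KEnv {n : ℕ} (K Ω : Set (Euc n)) (u : Euc n → ℝ) (x : Euc n) : ℝ :=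
  sSup {z : ℝ | ∃ a : ℝ, ∃ ξ ∈ K, (∀ y ∈ closure Ω, a + ⟪ξ, y⟫ ≤ u y) ∧ z = a + ⟪ξ, x⟫}

/-- The subdifferential of `φ` at `x`. -/
def subdiff {n : ℕ} (φ : Euc n → ℝ) (x : Euc n) : Set (Euc n) :=
  {ξ | ∀ y, φ x + ⟪ξ, y - x⟫ ≤ φ y}

/-- The set of minimizers `S_ξ = argmin_{x ∈ cl Ω} (u x − ξ·x)`. -/
def Sset {n : ℕ} (Ω : Set (Euc n)) (u : Euc n → ℝ) (ξ : Euc n) : Set (Euc n) :=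
  {x ∈ closure Ω | ∀ y ∈ closure Ω, u x - ⟪ξ, x⟫ ≤ u y - ⟪ξ, y⟫}

/-- The normal cone of `K` at `ξ`. -/
def normalCone {n : ℕ} (K : Set (Euc n)) (ξ : Euc n) : Set (Euc n) :=
  {v | ∀ ξ' ∈ K, ⟪v, ξ' - ξ⟫ ≤ 0}

/-- Convex hull of a compact set in Euclidean space is compact (via Carathéodory). -/
lemma isCompact_convexHull' {n : ℕ} {S : Set (Euc n)} (hS : IsCompact S) :
    IsCompact (convexHull ℝ S) := by
  classical
  rcases S.eq_empty_or_nonempty with rfl | ⟨s₀, hs₀⟩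
  · simpa [convexHull_empty] using isCompact_empty
  have hD : IsCompact ((stdSimplex ℝ (Fin (n + 1))) ×ˢ
      (Set.univ.pi fun _ : Fin (n + 1) => S)) :=
    (isCompact_stdSimplex (𝕜 := ℝ) (ι := Fin (n + 1))).prod (isCompact_univ_pi fun _ => hS)
  have hf : Continuous (fun p : (Fin (n + 1) → ℝ) × (Fin (n + 1) → Euc n) =>
      ∑ i, p.1 i • p.2 i) := by
    apply continuous_finset_sum
    intro i _
    exact ((continuous_apply i).comp continuous_fst).smul
      ((continuous_apply i).comp continuous_snd)
  have himg : (fun p : (Fin (n + 1) → ℝ) × (Fin (n + 1) → Euc n) => ∑ i, p.1 i • p.2 i) ''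
      ((stdSimplex ℝ (Fin (n + 1))) ×ˢ (Set.univ.pi fun _ => S)) = convexHull ℝ S := by
    apply Subset.antisymm
    · rintro _ ⟨⟨w, y⟩, ⟨hw, hy⟩, rfl⟩
      exact (convex_convexHull ℝ S).sum_mem (fun i _ => hw.1 i) hw.2
        (fun i _ => subset_convexHull ℝ S (hy i (mem_univ i)))
    · intro x hx
      obtain ⟨ι, hι, z, w, hzS, hai, hw0, hw1, hxeq⟩ :=
        eq_pos_convex_span_of_mem_convexHull hx
      have hcard : Fintype.card ι ≤ n + 1 := by
        have h1 := hai.card_le_finrank_succ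
        have h3 := Submodule.finrank_le (vectorSpan ℝ (Set.range z))
        have h2 : Module.finrank ℝ (vectorSpan ℝ (Set.range z)) ≤ n := by
          simpa [finrank_euclideanSpace_fin] using h3
        omega
      obtain ⟨e⟩ : Nonempty (ι ↪ Fin (n + 1)) :=
        Function.Embedding.nonempty_of_card_le (by simpa using hcard)
      set w' : Fin (n + 1) → ℝ := fun j => if h : ∃ i, e i = j then w h.choose else 0 with hw'
      set y' : Fin (n + 1) → Euc n := fun j => if h : ∃ i, e i = j then z h.choose else s₀
        with hy'
      have key : ∀ i : ι, w' (e i) = w i ∧ y' (e i) = z i := by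
        intro i
        have h : ∃ i', e i' = e i := ⟨i, rfl⟩
        have hch : h.choose = i := e.injective h.choose_spec
        constructor
        · simp only [hw', dif_pos h, hch]
        · simp only [hy', dif_pos h, hch]
      have hzero : ∀ j : Fin (n + 1), j ∉ Finset.univ.map e → w' j = 0 := by
        intro j hj
        have hne : ¬∃ i, e i = j := by
          rintro ⟨i, hi⟩
          exact hj (Finset.mem_map.2 ⟨i, Finset.mem_univ i, hi⟩)
        simp only [hw', dif_neg hne]
      have hw'sum : ∑ j, w' j = 1 := by
        rw [← Finset.sum_subset (Finset.subset_univ (Finset.univ.map e))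
          (fun j _ hj => hzero j hj), Finset.sum_map]
        rw [← hw1]
        exact Finset.sum_congr rfl fun i _ => (key i).1
      have hsmul : ∑ j, w' j • y' j = x := by
        rw [← Finset.sum_subset (Finset.subset_univ (Finset.univ.map e))
          (fun j _ hj => by rw [hzero j hj, zero_smul]), Finset.sum_map]
        rw [← hxeq]
        exact Finset.sum_congr rfl fun i _ => by rw [(key i).1, (key i).2]
      refine ⟨(w', y'), ⟨⟨fun j => ?_, hw'sum⟩, fun j _ => ?_⟩, hsmul⟩
      · by_cases h : ∃ i, e i = j
        · simp only [hw', dif_pos h]; exact (hw0 _).le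
        · simp only [hw', dif_neg h]; exact le_rfl
      · by_cases h : ∃ i, e i = j
        · simp only [hy', dif_pos h]; exact hzS ⟨_, rfl⟩
        · simp only [hy', dif_neg h]; exact hs₀
  exact himg ▸ hD.image hf

set_option maxHeartbeats 2000000 in
/-- Contact set and tangency properties of the `K`-envelope. -/
theorem stmt_7 {n : ℕ} (K Ω : Set (Euc n)) (u : Euc n → ℝ)
    (hKcp : IsCompact K) (hKcv : Convex ℝ K) (hKne : K.Nonempty)
    (hΩo : IsOpen Ω) (hΩb : Bornology.IsBounded Ω) (hΩne : Ω.Nonempty)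
    (hu : ContinuousOn u (closure Ω)) (hu2 : ContDiffOn ℝ 2 u Ω) :
    -- (a)
    (∀ ξ ∈ K, ∀ xξ ∈ Sset Ω u ξ,
      KEnv K Ω u xξ = u xξ ∧ ξ ∈ subdiff (KEnv K Ω u) xξ) ∧
    -- (b)
    (∀ x : Euc n, ∀ ξ ∈ subdiff (KEnv K Ω u) x ∩ K,
      ∃ v ∈ normalCone K ξ, x - v ∈ convexHull ℝ (Sset Ω u ξ)) := by
  classical
  set Z : Euc n → Set ℝ := fun x =>
    {z : ℝ | ∃ a : ℝ, ∃ ξ ∈ K, (∀ y ∈ closure Ω, a + ⟪ξ, y⟫ ≤ u y) ∧ z = a + ⟪ξ, x⟫} with hZ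
  have hKEnv : ∀ x, KEnv K Ω u x = sSup (Z x) := fun _ => rfl
  have hclcp : IsCompact (closure Ω) :=
    Metric.isCompact_of_isClosed_isBounded isClosed_closure hΩb.closure
  have hclne : (closure Ω).Nonempty := hΩne.closure
  have hcont : ∀ ξ : Euc n, ContinuousOn (fun y => u y - ⟪ξ, y⟫) (closure Ω) :=
    fun ξ => hu.sub ((continuous_const.inner continuous_id).continuousOn)
  have hSne : ∀ ξ : Euc n, (Sset Ω u ξ).Nonempty := by
    intro ξ
    obtain ⟨x₀, hx₀, hmin⟩ := hclcp.exists_isMinOn hclne (hcont ξ)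
    exact ⟨x₀, hx₀, fun y hy => hmin hy⟩
  have hadm : ∀ ξ, ∀ xξ ∈ Sset Ω u ξ, ∀ y ∈ closure Ω,
      (u xξ - ⟪ξ, xξ⟫) + ⟪ξ, y⟫ ≤ u y := by
    intro ξ xξ hxξ y hy
    have := hxξ.2 y hy
    linarith
  have hmemZ : ∀ ξ ∈ K, ∀ xξ ∈ Sset Ω u ξ, ∀ x : Euc n,
      (u xξ - ⟪ξ, xξ⟫) + ⟪ξ, x⟫ ∈ Z x := by
    intro ξ hξ xξ hxξ x
    exact ⟨u xξ - ⟪ξ, xξ⟫, ξ, hξ, hadm ξ xξ hxξ, rfl⟩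
  obtain ⟨C, hC⟩ : ∃ C, ∀ ξ ∈ K, ‖ξ‖ ≤ C := isBounded_iff_forall_norm_le.1 hKcp.isBounded
  obtain ⟨y₀, hy₀⟩ := hclne
  have hbdd : ∀ x, BddAbove (Z x) := by
    intro x
    refine ⟨u y₀ + C * ‖x - y₀‖, ?_⟩
    rintro z ⟨a, ξ', hξ'K, hle, rfl⟩
    have h1 : a + ⟪ξ', y₀⟫ ≤ u y₀ := hle y₀ hy₀
    have h2 : ⟪ξ', x - y₀⟫ ≤ ‖ξ'‖ * ‖x - y₀‖ := real_inner_le_norm _ _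
    have h3 : ‖ξ'‖ * ‖x - y₀‖ ≤ C * ‖x - y₀‖ :=
      mul_le_mul_of_nonneg_right (hC ξ' hξ'K) (norm_nonneg _)
    have h4 : ⟪ξ', x - y₀⟫ = ⟪ξ', x⟫ - ⟪ξ', y₀⟫ := inner_sub_right _ _ _
    linarith
  have hZne : ∀ x, (Z x).Nonempty := by
    obtain ⟨ξ₀, hξ₀⟩ := hKne
    obtain ⟨x₀, hx₀⟩ := hSne ξ₀
    exact fun x => ⟨_, hmemZ ξ₀ hξ₀ x₀ hx₀ x⟩
  have ha : ∀ ξ ∈ K, ∀ xξ ∈ Sset Ω u ξ,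
      KEnv K Ω u xξ = u xξ ∧ ξ ∈ subdiff (KEnv K Ω u) xξ := by
    intro ξ hξ xξ hxξ
    have hup : KEnv K Ω u xξ ≤ u xξ := by
      rw [hKEnv]
      apply csSup_le (hZne _)
      rintro z ⟨a, ξ', hξ'K, hle, rfl⟩
      exact hle xξ hxξ.1
    have hlow : u xξ ≤ KEnv K Ω u xξ := by
      have h := le_csSup (hbdd xξ) (hmemZ ξ hξ xξ hxξ xξ)
      rw [hKEnv]
      linarith
    have heq := le_antisymm hup hlow
    refine ⟨heq, fun y => ?_⟩
    have h := le_csSup (hbdd y) (hmemZ ξ hξ xξ hxξ y)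
    have hinner : ⟪ξ, y - xξ⟫ = ⟪ξ, y⟫ - ⟪ξ, xξ⟫ := inner_sub_right _ _ _
    rw [heq, hKEnv y]
    linarith
  refine ⟨ha, ?_⟩
  intro x ξ hξmem
  obtain ⟨hsub, hξK⟩ := hξmem
  obtain ⟨x₀, hx₀⟩ := hSne ξ
  have hfromA := ha ξ hξK x₀ hx₀
  have hEnvEq : KEnv K Ω u x = (u x₀ - ⟪ξ, x₀⟫) + ⟪ξ, x⟫ := by
    have h1 : KEnv K Ω u x + ⟪ξ, x₀ - x⟫ ≤ KEnv K Ω u x₀ := hsub x₀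
    have h2 : (u x₀ - ⟪ξ, x₀⟫) + ⟪ξ, x⟫ ≤ KEnv K Ω u x := by
      rw [hKEnv]
      exact le_csSup (hbdd x) (hmemZ ξ hξK x₀ hx₀ x)
    have h3 : ⟪ξ, x₀ - x⟫ = ⟪ξ, x₀⟫ - ⟪ξ, x⟫ := inner_sub_right _ _ _
    have h4 := hfromA.1
    linarith
  -- key directional inequality
  have hkey : ∀ ξ' ∈ K, ∃ y ∈ Sset Ω u ξ, ⟪ξ' - ξ, x⟫ ≤ ⟪ξ' - ξ, y⟫ := by
    intro ξ' hξ'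
    set d := ξ' - ξ with hd
    set tk : ℕ → ℝ := fun k => 1 / (k + 1 : ℝ) with htk
    have htk0 : ∀ k, 0 < tk k := fun k => by positivity
    have htk1 : ∀ k, tk k ≤ 1 := by
      intro k
      rw [htk]
      rw [div_le_one (by positivity)]
      norm_num
    have hξtK : ∀ k : ℕ, ξ + tk k • d ∈ K := by
      intro k
      have h : (1 - tk k) • ξ + tk k • ξ' ∈ K :=
        hKcv hξK hξ' (by linarith [htk1 k]) (htk0 k).le (by ring)
      have heq2 : (1 - tk k) • ξ + tk k • ξ' = ξ + tk k • d := by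
        rw [hd, smul_sub, sub_smul, one_smul]
        abel
      rwa [heq2] at h
    have hkt : ∀ k : ℕ, ∃ y ∈ Sset Ω u (ξ + tk k • d), ⟪d, x⟫ ≤ ⟪d, y⟫ := by
      intro k
      obtain ⟨y, hy⟩ := hSne (ξ + tk k • d)
      refine ⟨y, hy, ?_⟩
      have h5 : (u y - ⟪ξ + tk k • d, y⟫) + ⟪ξ + tk k • d, x⟫ ≤ KEnv K Ω u x := by
        rw [hKEnv]
        exact le_csSup (hbdd x) (hmemZ _ (hξtK k) y hy x)
      have h6 : u x₀ - ⟪ξ, x₀⟫ ≤ u y - ⟪ξ, y⟫ := hx₀.2 y hy.1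
      rw [hEnvEq] at h5
      have e1 : ⟪ξ + tk k • d, y⟫ = ⟪ξ, y⟫ + tk k * ⟪d, y⟫ := by
        rw [inner_add_left, real_inner_smul_left]
      have e2 : ⟪ξ + tk k • d, x⟫ = ⟪ξ, x⟫ + tk k * ⟪d, x⟫ := by
        rw [inner_add_left, real_inner_smul_left]
      have h7 : tk k * ⟪d, x⟫ ≤ tk k * ⟪d, y⟫ := by linarith
      exact le_of_mul_le_mul_left h7 (htk0 k)
    choose ys hys hge using hkt
    have hyscl : ∀ k, ys k ∈ closure Ω := fun k => (hys k).1
    obtain ⟨y, hycl, φ, hφ, hlim⟩ := hclcp.tendsto_subseq hyscl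
    have htklim : Filter.Tendsto (fun j => tk (φ j)) Filter.atTop (𝓝 0) :=
      tendsto_one_div_add_atTop_nhds_zero_nat.comp hφ.tendsto_atTop
    have hξklim : Filter.Tendsto (fun j => ξ + tk (φ j) • d) Filter.atTop (𝓝 ξ) := by
      have h2 : Filter.Tendsto (fun j => tk (φ j) • d) Filter.atTop (𝓝 (0 : Euc n)) := by
        simpa using htklim.smul_const d
      simpa using (tendsto_const_nhds (x := ξ) (f := Filter.atTop (α := ℕ))).add h2
    have hulim : Filter.Tendsto (fun j => u (ys (φ j))) Filter.atTop (𝓝 (u y)) := by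
      have hcw : ContinuousWithinAt u (closure Ω) y := hu y hycl
      apply hcw.tendsto.comp
      apply tendsto_nhdsWithin_of_tendsto_nhds_of_eventually_within _ hlim
      exact Filter.Eventually.of_forall fun j => hyscl (φ j)
    have hSmem : y ∈ Sset Ω u ξ := by
      refine ⟨hycl, fun z hz => ?_⟩
      have hineq : ∀ j, u (ys (φ j)) - ⟪ξ + tk (φ j) • d, ys (φ j)⟫ ≤
          u z - ⟪ξ + tk (φ j) • d, z⟫ := fun j => (hys (φ j)).2 z hz
      have hA : Filter.Tendsto (fun j => u (ys (φ j)) - ⟪ξ + tk (φ j) • d, ys (φ j)⟫)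
          Filter.atTop (𝓝 (u y - ⟪ξ, y⟫)) := hulim.sub (hξklim.inner hlim)
      have hB : Filter.Tendsto (fun j => u z - ⟪ξ + tk (φ j) • d, z⟫)
          Filter.atTop (𝓝 (u z - ⟪ξ, z⟫)) :=
        tendsto_const_nhds.sub (hξklim.inner tendsto_const_nhds)
      exact le_of_tendsto_of_tendsto' hA hB hineq
    refine ⟨y, hSmem, ?_⟩
    have hdx : Filter.Tendsto (fun j => ⟪d, ys (φ j)⟫) Filter.atTop (𝓝 ⟪d, y⟫) :=
      tendsto_const_nhds.inner hlim
    exact le_of_tendsto_of_tendsto' tendsto_const_nhds hdx (fun j => hge (φ j))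
  -- compactness of Sset
  have hSclosed : IsClosed (Sset Ω u ξ) := by
    have hrep : Sset Ω u ξ = ⋂ z ∈ closure Ω,
        (closure Ω ∩ (fun x' => u x' - ⟪ξ, x'⟫) ⁻¹' Iic (u z - ⟪ξ, z⟫)) := by
      ext p
      simp only [Sset, mem_setOf_eq, mem_iInter, mem_inter_iff, mem_preimage, mem_Iic]
      constructor
      · rintro ⟨h1, h2⟩ z hz
        exact ⟨h1, h2 z hz⟩
      · intro h
        exact ⟨(h y₀ hy₀).1, fun z hz => (h z hz).2⟩
    rw [hrep]
    exact isClosed_biInter fun z _ =>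
      (hcont ξ).preimage_isClosed_of_isClosed isClosed_closure isClosed_Iic
  have hScp : IsCompact (Sset Ω u ξ) := hclcp.of_isClosed_subset hSclosed fun z hz => hz.1
  have hconvcp : IsCompact (convexHull ℝ (Sset Ω u ξ)) := isCompact_convexHull' hScp
  have hNclosed : IsClosed (normalCone K ξ) := by
    have hrep : normalCone K ξ = ⋂ ξ' ∈ K, {v : Euc n | ⟪v, ξ' - ξ⟫ ≤ 0} := by
      ext v
      simp [normalCone]
    rw [hrep]
    exact isClosed_biInter fun ξ' _ =>
      isClosed_le (continuous_id.inner continuous_const) continuous_const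
  have hNconv : Convex ℝ (normalCone K ξ) := by
    intro v₁ h₁ v₂ h₂ a b haa hbb hab
    intro ξ' hξ'
    have e : ⟪a • v₁ + b • v₂, ξ' - ξ⟫ = a * ⟪v₁, ξ' - ξ⟫ + b * ⟪v₂, ξ' - ξ⟫ := by
      rw [inner_add_left, real_inner_smul_left, real_inner_smul_left]
    rw [e]
    have g1 := h₁ ξ' hξ'
    have g2 := h₂ ξ' hξ'
    nlinarith
  have h0N : (0 : Euc n) ∈ normalCone K ξ := by
    intro ξ' hξ'
    simp
  have hxC : x ∈ convexHull ℝ (Sset Ω u ξ) + normalCone K ξ := by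
    by_contra hxC
    have hCclosed : IsClosed (convexHull ℝ (Sset Ω u ξ) + normalCone K ξ) :=
      hNclosed.add_left_of_isCompact hconvcp
    have hCconv : Convex ℝ (convexHull ℝ (Sset Ω u ξ) + normalCone K ξ) :=
      (convex_convexHull ℝ _).add hNconv
    obtain ⟨f, c, hfb, hfx⟩ := geometric_hahn_banach_closed_point hCconv hCclosed hxC
    have hx₀conv : x₀ ∈ convexHull ℝ (Sset Ω u ξ) := subset_convexHull ℝ _ hx₀
    have hfx₀ : f x₀ < c := by
      have := hfb (x₀ + 0) (Set.add_mem_add hx₀conv h0N)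
      simpa using this
    have hfN : ∀ v ∈ normalCone K ξ, f v ≤ 0 := by
      intro v hv
      by_contra hpos
      push_neg at hpos
      set t : ℝ := (c - f x₀ + 1) / f v with htdef
      have ht : 0 < t := div_pos (by linarith) hpos
      have htv : t • v ∈ normalCone K ξ := by
        intro ξ' hξ'
        rw [real_inner_smul_left]
        have := hv ξ' hξ'
        nlinarith
      have hco := hfb (x₀ + t • v) (Set.add_mem_add hx₀conv htv)
      rw [map_add, f.map_smul, smul_eq_mul, htdef, div_mul_cancel₀ _ (ne_of_gt hpos)] at hco
      linarith
    set w : Euc n := (InnerProductSpace.toDual ℝ (Euc n)).symm f with hwdef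
    have hwf : ∀ z : Euc n, ⟪w, z⟫ = f z := fun z => InnerProductSpace.toDual_symm_apply
    set coneS : Set (Euc n) := {p | ∃ t : ℝ, 0 ≤ t ∧ ∃ ξ' ∈ K, p = t • (ξ' - ξ)} with hconeS
    set A : Set (Euc n) := {p | ∃ y' ∈ Sset Ω u ξ, ⟪p, x⟫ ≤ ⟪p, y'⟫} with hAdef
    have hAclosed : IsClosed A := by
      apply IsSeqClosed.isClosed
      intro pk p hpk hplim
      choose yk hyk hineq using hpk
      obtain ⟨yy, hyyS, ψ, hψ, hyylim⟩ := hScp.tendsto_subseq hyk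
      refine ⟨yy, hyyS, ?_⟩
      have hL : Filter.Tendsto (fun j => ⟪pk (ψ j), x⟫) Filter.atTop (𝓝 ⟪p, x⟫) :=
        (hplim.comp hψ.tendsto_atTop).inner tendsto_const_nhds
      have hR : Filter.Tendsto (fun j => ⟪pk (ψ j), yk (ψ j)⟫) Filter.atTop (𝓝 ⟪p, yy⟫) :=
        (hplim.comp hψ.tendsto_atTop).inner hyylim
      exact le_of_tendsto_of_tendsto' hL hR fun j => hineq (ψ j)
    have hconeA : coneS ⊆ A := by
      rintro p ⟨t, ht, ξ', hξ', rfl⟩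
      obtain ⟨y', hy'S, hy'⟩ := hkey ξ' hξ'
      refine ⟨y', hy'S, ?_⟩
      rw [real_inner_smul_left, real_inner_smul_left]
      exact mul_le_mul_of_nonneg_left hy' ht
    have hconeconv : Convex ℝ coneS := by
      rintro p₁ ⟨t₁, ht₁, ξ₁, hξ₁, rfl⟩ p₂ ⟨t₂, ht₂, ξ₂, hξ₂, rfl⟩ a b haa hbb hab
      rcases eq_or_lt_of_le (by positivity : (0:ℝ) ≤ a * t₁ + b * t₂) with hs | hs
      · refine ⟨0, le_rfl, ξ₁, hξ₁, ?_⟩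
        have h1 : a * t₁ = 0 := by nlinarith [mul_nonneg haa ht₁, mul_nonneg hbb ht₂]
        have h2 : b * t₂ = 0 := by nlinarith [mul_nonneg haa ht₁, mul_nonneg hbb ht₂]
        rw [smul_smul, smul_smul, h1, h2]
        simp
      · set s := a * t₁ + b * t₂ with hsdef
        have hs0 : s ≠ 0 := ne_of_gt hs
        refine ⟨s, hs.le, ((a * t₁) / s) • ξ₁ + ((b * t₂) / s) • ξ₂, ?_, ?_⟩
        · exact hKcv hξ₁ hξ₂ (div_nonneg (mul_nonneg haa ht₁) hs.le)
            (div_nonneg (mul_nonneg hbb ht₂) hs.le) (by field_simp; exact hsdef.symm)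
        · have c1 : s * ((a * t₁) / s) = a * t₁ := by field_simp
          have c2 : s * ((b * t₂) / s) = b * t₂ := by field_simp
          simp only [smul_sub, smul_add, smul_smul]
          rw [c1, c2, hsdef, add_smul]
          abel
    have hwcl : w ∈ closure coneS := by
      by_contra hwcl
      obtain ⟨g, c₂, hgb, hgw⟩ := geometric_hahn_banach_closed_point
        hconeconv.closure isClosed_closure hwcl
      have h0cone : (0 : Euc n) ∈ coneS := ⟨0, le_rfl, ξ, hξK, by simp⟩
      have hc₂pos : 0 < c₂ := by
        have := hgb 0 (subset_closure h0cone)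
        simpa using this
      have hgle : ∀ ξ' ∈ K, g (ξ' - ξ) ≤ 0 := by
        intro ξ' hξ'
        by_contra hpos
        push_neg at hpos
        set t : ℝ := (c₂ + 1) / g (ξ' - ξ) with htdef
        have ht : 0 < t := div_pos (by linarith) hpos
        have hco := hgb (t • (ξ' - ξ)) (subset_closure ⟨t, ht.le, ξ', hξ', rfl⟩)
        rw [g.map_smul, smul_eq_mul, htdef, div_mul_cancel₀ _ (ne_of_gt hpos)] at hco
        linarith
      set v : Euc n := (InnerProductSpace.toDual ℝ (Euc n)).symm g with hvdef
      have hvf : ∀ z : Euc n, ⟪v, z⟫ = g z := fun z => InnerProductSpace.toDual_symm_apply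
      have hvN : v ∈ normalCone K ξ := by
        intro ξ' hξ'
        rw [hvf]
        exact hgle ξ' hξ'
      have h1 : f v ≤ 0 := hfN v hvN
      have h2 : f v = g w := by
        rw [← hwf v, real_inner_comm, hvf w]
      linarith
    have hwA : w ∈ A := closure_minimal hconeA hAclosed hwcl
    obtain ⟨y', hy'S, hy'⟩ := hwA
    have hfy' : f y' < c := by
      have := hfb (y' + 0) (Set.add_mem_add (subset_convexHull ℝ _ hy'S) h0N)
      simpa using this
    rw [hwf, hwf] at hy'
    linarith
  obtain ⟨s, hs, v, hv, hsv⟩ := Set.mem_add.1 hxC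
  refine ⟨v, hv, ?_⟩
  have hxv : x - v = s := by
    rw [← hsv]
    abel
  rw [hxv]
  exact hs
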